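/- Let V = F_q^{k_1} × ... × F_q^{k_n} with chain poset block metric d, and let H be the subgroup of symmetries of the form T(x_1,...,x_n) = (π_{(x_2,...,x_n)}(x_1), x_2, ..., x_n) where each π_X is a permutation of F_q^{k_1}, and K the subgroup of symmetries fixing the first coordinate: T(x_1,...,x_n) = (x_1, F_2(x_2,...,x_n), ..., F_n(x_n)). Then H is a normal subgroup of Symm(V,d), H ∩ K = {id}, and Symm(V,d) = H·K, so Symm(V,d) is the semidirect product H ⋊ K. -/

import Mathlib

/-- The chain poset block metric: `d(u,v) = max{ i : u_i ≠ v_i }` (1-indexed), `0` if `u = v`. -/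
def chainDist {F : Type*} [DecidableEq F] {n : ℕ} {k : Fin n → ℕ}
    (u v : ∀ i : Fin n, Fin (k i) → F) : ℕ :=
  (Finset.univ.filter fun i => u i ≠ v i).sup fun i => (i : ℕ) + 1

/-- The set of symmetries of the chain poset block space. -/
def SymmSet (F : Type*) [Field F] [Fintype F] [DecidableEq F] {n : ℕ} (k : Fin n → ℕ) :
    Set (Equiv.Perm (∀ i : Fin n, Fin (k i) → F)) :=
  {T | ∀ u v, chainDist (T u) (T v) = chainDist u v}

/-- `H`: symmetries of the form `T(x_1,…,x_n) = (π_{(x_2,…,x_n)}(x_1), x_2, …, x_n)`,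
i.e. symmetries fixing all coordinates except the first. -/
def HSet (F : Type*) [Field F] [Fintype F] [DecidableEq F] {n : ℕ} (k : Fin n → ℕ)
    (hn : 0 < n) : Set (Equiv.Perm (∀ i : Fin n, Fin (k i) → F)) :=
  {T | T ∈ SymmSet F k ∧ ∀ v (j : Fin n), j ≠ ⟨0, hn⟩ → T v j = v j}

/-- `K`: symmetries of the form `T(x_1,…,x_n) = (x_1, F_2(x_2,…,x_n), …, F_n(x_n))`,
i.e. symmetries fixing the first coordinate whose other components do not depend on
the first coordinate. -/
def KSet (F : Type*) [Field F] [Fintype F] [DecidableEq F] {n : ℕ} (k : Fin n → ℕ)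
    (hn : 0 < n) : Set (Equiv.Perm (∀ i : Fin n, Fin (k i) → F)) :=
  {T | T ∈ SymmSet F k ∧ (∀ v, T v ⟨0, hn⟩ = v ⟨0, hn⟩) ∧
    ∀ u v, (∀ j : Fin n, j ≠ ⟨0, hn⟩ → u j = v j) →
      ∀ j : Fin n, j ≠ ⟨0, hn⟩ → T u j = T v j}

lemma cd_le {F : Type*} [DecidableEq F] {n : ℕ} {k : Fin n → ℕ}
    (u v : ∀ i : Fin n, Fin (k i) → F) (m : ℕ) :
    chainDist u v ≤ m ↔ ∀ j : Fin n, m ≤ (j : ℕ) → u j = v j := by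
  unfold chainDist
  rw [Finset.sup_le_iff]
  constructor
  · intro h j hj
    by_contra hne
    have := h j (by simp [hne])
    omega
  · intro h j hj
    simp only [Finset.mem_filter, Finset.mem_univ, true_and] at hj
    by_contra hlt
    exact hj (h j (by omega))

lemma cd_zero {F : Type*} [DecidableEq F] {n : ℕ} {k : Fin n → ℕ}
    (u v : ∀ i : Fin n, Fin (k i) → F) :
    chainDist u v = 0 ↔ u = v := by
  rw [← Nat.le_zero, cd_le]
  constructor
  · intro h; funext j; exact h j (Nat.zero_le _)
  · intro h j _; rw [h]

lemma symm_inv {F : Type*} [Field F] [Fintype F] [DecidableEq F] {n : ℕ} {k : Fin n → ℕ}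
    {T : Equiv.Perm (∀ i : Fin n, Fin (k i) → F)} (hT : T ∈ SymmSet F k) :
    T⁻¹ ∈ SymmSet F k := by
  intro u v
  have := hT (T⁻¹ u) (T⁻¹ v)
  simpa using this.symm

lemma symm_pres {F : Type*} [Field F] [Fintype F] [DecidableEq F] {n : ℕ} {k : Fin n → ℕ}
    {T : Equiv.Perm (∀ i : Fin n, Fin (k i) → F)} (hT : T ∈ SymmSet F k)
    {u v : ∀ i : Fin n, Fin (k i) → F} {m : ℕ}
    (h : ∀ j : Fin n, m ≤ (j : ℕ) → u j = v j) :
    ∀ j : Fin n, m ≤ (j : ℕ) → T u j = T v j := by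
  have h1 : chainDist u v ≤ m := (cd_le u v m).mpr h
  have h2 : chainDist (T u) (T v) ≤ m := by rw [hT u v]; exact h1
  exact (cd_le _ _ m).mp h2

lemma ne_zero_iff {n : ℕ} (hn : 0 < n) (j : Fin n) :
    j ≠ ⟨0, hn⟩ ↔ 1 ≤ (j : ℕ) := by
  have h0 : ((⟨0, hn⟩ : Fin n) : ℕ) = 0 := rfl
  rw [Ne, Fin.ext_iff, h0]
  omega

/-- `Symm(V,d)` is the (inner) semidirect product `H ⋊ K`: `H` is normal in the symmetry
group, `H ∩ K = {id}` and every symmetry factors as `h * k` with `h ∈ H`, `k ∈ K`. -/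
theorem stmt5 {F : Type*} [Field F] [Fintype F] [DecidableEq F] {n : ℕ} (k : Fin n → ℕ)
    (hn : 0 < n) :
    (∀ T ∈ SymmSet F k, ∀ h ∈ HSet F k hn, T * h * T⁻¹ ∈ HSet F k hn) ∧
    (HSet F k hn ∩ KSet F k hn = {1}) ∧
    (∀ T ∈ SymmSet F k, ∃ h ∈ HSet F k hn, ∃ k' ∈ KSet F k hn, T = h * k') := by
  refine ⟨?_, ?_, ?_⟩
  · -- normality
    rintro T hT h ⟨hhS, hh⟩
    constructor
    · intro u v
      simp only [Equiv.Perm.mul_apply]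
      rw [hT, hhS, symm_inv hT]
    · intro v j hj
      rw [ne_zero_iff hn] at hj
      simp only [Equiv.Perm.mul_apply]
      have step : ∀ j : Fin n, 1 ≤ (j : ℕ) → h (T⁻¹ v) j = T⁻¹ v j := fun j' hj' =>
        hh (T⁻¹ v) j' ((ne_zero_iff hn j').mpr hj')
      have := symm_pres hT step j hj
      rwa [show T (T⁻¹ v) = v from T.apply_symm_apply v] at this
  · -- intersection
    ext x
    simp only [Set.mem_inter_iff, Set.mem_singleton_iff]
    constructor
    · rintro ⟨⟨_, hH⟩, _, hK0, _⟩
      apply Equiv.ext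
      intro v
      funext j
      by_cases hj : j = ⟨0, hn⟩
      · subst hj; exact hK0 v
      · exact hH v j hj
    · rintro rfl
      refine ⟨⟨fun u v => rfl, fun v j _ => rfl⟩, fun u v => rfl, fun v => rfl,
        fun u v huv j hj => huv j hj⟩
  · -- decomposition
    intro T hT
    set f : (∀ i : Fin n, Fin (k i) → F) → (∀ i : Fin n, Fin (k i) → F) :=
      fun v j => if (j : ℕ) = 0 then v j else T v j with hf
    have hfinj : Function.Injective f := by
      intro u v huv
      have h0 : u ⟨0, hn⟩ = v ⟨0, hn⟩ := by
        have := congrFun huv ⟨0, hn⟩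
        simpa [hf] using this
      have htail : ∀ j : Fin n, 1 ≤ (j : ℕ) → T u j = T v j := by
        intro j hj
        have := congrFun huv j
        simpa [hf, Nat.pos_iff_ne_zero.mp hj] using this
      have htail' : ∀ j : Fin n, 1 ≤ (j : ℕ) → u j = v j := by
        intro j hj
        have := symm_pres (symm_inv hT) htail j hj
        simpa using this
      funext j
      rcases Nat.eq_zero_or_pos (j : ℕ) with h | h
      · have : j = ⟨0, hn⟩ := Fin.ext h
        rw [this]; exact h0
      · exact htail' j h
    let k' : Equiv.Perm (∀ i : Fin n, Fin (k i) → F) :=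
      Equiv.ofBijective f (Finite.injective_iff_bijective.mp hfinj)
    have hk'app : ∀ v, k' v = f v := fun v => rfl
    have hk'S : k' ∈ SymmSet F k := by
      intro u v
      have key : ∀ m : ℕ, chainDist (f u) (f v) ≤ m ↔ chainDist u v ≤ m := by
        intro m
        rcases Nat.eq_zero_or_pos m with rfl | hm
        · simp only [Nat.le_zero, cd_zero]
          exact ⟨fun h => hfinj h, fun h => by rw [h]⟩
        · rw [cd_le, cd_le]
          constructor
          · intro h
            have hT' : ∀ j : Fin n, m ≤ (j : ℕ) → T u j = T v j := by
              intro j hj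
              have := h j hj
              simpa [hf, show (j : ℕ) ≠ 0 by omega] using this
            intro j hj
            have := symm_pres (symm_inv hT) hT' j hj
            simpa using this
          · intro h j hj
            have := symm_pres hT h j hj
            simpa [hf, show (j : ℕ) ≠ 0 by omega] using this
      exact le_antisymm ((key _).mpr le_rfl) (by
        have := (key (chainDist (f u) (f v))).mp le_rfl
        exact this)
    have hk'K : k' ∈ KSet F k hn := by
      refine ⟨hk'S, ?_, ?_⟩
      · intro v
        rw [hk'app]
        simp [hf]
      · intro u v huv j hj
        rw [hk'app, hk'app]
        rw [ne_zero_iff hn] at hj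
        have h1 : ∀ j : Fin n, (1:ℕ) ≤ (j : ℕ) → u j = v j := fun j' hj' =>
          huv j' ((ne_zero_iff hn j').mpr hj')
        have := symm_pres hT h1 j hj
        simp only [hf, show (j : ℕ) ≠ 0 by omega, if_neg, ite_false]
        exact this
    refine ⟨T * k'⁻¹, ?_, k', hk'K, (inv_mul_cancel_right T k').symm⟩
    constructor
    · intro u v
      simp only [Equiv.Perm.mul_apply]
      rw [hT, symm_inv hk'S]
    · intro v j hj
      rw [ne_zero_iff hn] at hj
      simp only [Equiv.Perm.mul_apply]
      have hv : f (k'⁻¹ v) = v := by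
        have : k' (k'⁻¹ v) = v := k'.apply_symm_apply v
        rwa [hk'app] at this
      have := congrFun hv j
      simpa [hf, show (j : ℕ) ≠ 0 by omega] using this
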